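/- (Theorem 1, high-probability coefficient error.) There exists a universal constant C > 0 with the following property. Let Θ ∈ ℝ^{n×p} be a design matrix whose Gram matrix ΘᵀΘ has smallest eigenvalue at least c·n for some c > 0, and let ε be a random vector in ℝⁿ whose coordinates are independent centered Gaussians with variance s² > 0. Then for every δ ∈ (0, 1/2], the least-squares estimator ξ̂ = (ΘᵀΘ)⁻¹Θᵀ(Θξ* + ε) satisfies, with probability at least 1 − δ, ‖ξ̂ − ξ*‖₂ ≤ C·s·√(p·log(1/δ)/(c·n)). -/

import Mathlib

open MeasureTheory Matrix ProbabilityTheory NNReal Real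

namespace S6

lemma lintegral_exp_mul_gaussian (m : ℝ) (v : ℝ≥0) (hv : v ≠ 0) (u : ℝ) :
    ∫⁻ x, ENNReal.ofReal (rexp (u * x)) ∂(gaussianReal m v) =
      ENNReal.ofReal (rexp (u * m + v * u ^ 2 / 2)) := by
  rw [gaussianReal_of_var_ne_zero m hv,
    lintegral_withDensity_eq_lintegral_mul _ (measurable_gaussianPDF m v)
      (by fun_prop)]
  have hvpos : (0:ℝ) < (v:ℝ) := by positivity
  have key : ∀ x : ℝ, gaussianPDF m v x * ENNReal.ofReal (rexp (u * x)) =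
      ENNReal.ofReal (rexp (u * m + v * u ^ 2 / 2)) * gaussianPDF (m + v * u) v x := by
    intro x
    rw [gaussianPDF, gaussianPDF, ← ENNReal.ofReal_mul (gaussianPDFReal_nonneg _ _ _),
      ← ENNReal.ofReal_mul (exp_nonneg _)]
    congr 1
    simp only [gaussianPDFReal_def]
    have hexp : rexp (-(x - m) ^ 2 / (2 * v)) * rexp (u * x) =
        rexp (u * m + v * u ^ 2 / 2) * rexp (-(x - (m + v * u)) ^ 2 / (2 * v)) := by
      rw [← Real.exp_add, ← Real.exp_add]
      congr 1
      field_simp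
      ring
    linear_combination (Real.sqrt (2 * π * (v:ℝ)))⁻¹ * hexp
  simp_rw [Pi.mul_apply, key]
  rw [lintegral_const_mul _ (measurable_gaussianPDF _ v),
    lintegral_gaussianPDF_eq_one _ hv, mul_one]

lemma lintegral_exp_sq_quarter_gaussian :
    ∫⁻ x, ENNReal.ofReal (rexp (x ^ 2 / 4)) ∂(gaussianReal 0 1) =
      ENNReal.ofReal (Real.sqrt 2) := by
  rw [gaussianReal_of_var_ne_zero 0 one_ne_zero,
    lintegral_withDensity_eq_lintegral_mul _ (measurable_gaussianPDF 0 1) (by fun_prop)]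
  have key : ∀ x : ℝ, gaussianPDF 0 1 x * ENNReal.ofReal (rexp (x ^ 2 / 4)) =
      ENNReal.ofReal (Real.sqrt 2) * gaussianPDF 0 2 x := by
    intro x
    rw [gaussianPDF, gaussianPDF, ← ENNReal.ofReal_mul (gaussianPDFReal_nonneg _ _ _),
      ← ENNReal.ofReal_mul (Real.sqrt_nonneg _)]
    congr 1
    simp only [gaussianPDFReal_def, sub_zero]
    push_cast
    have h2 : Real.sqrt (2 * π * 2) = Real.sqrt (2 * π * 1) * Real.sqrt 2 := by
      rw [← Real.sqrt_mul (by positivity)]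
      norm_num
    rw [h2, mul_inv]
    have hexp : rexp (-x ^ 2 / (2 * 1)) * rexp (x ^ 2 / 4) = rexp (-x ^ 2 / (2 * 2)) := by
      rw [← Real.exp_add]
      congr 1
      ring
    have h22 : Real.sqrt 2 * (Real.sqrt 2)⁻¹ = 1 :=
      mul_inv_cancel₀ (by positivity)
    linear_combination (Real.sqrt (2 * π * 1))⁻¹ * hexp -
      ((Real.sqrt (2 * π * 1))⁻¹ * rexp (-x ^ 2 / (2 * 2))) * h22
  simp_rw [Pi.mul_apply, key]
  rw [lintegral_const_mul _ (measurable_gaussianPDF _ 2),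
    lintegral_gaussianPDF_eq_one _ two_ne_zero, mul_one]

lemma lintegral_pi_prod {k : ℕ} (ν : Measure ℝ) [IsProbabilityMeasure ν]
    (f : Fin k → ℝ → ENNReal) (hf : ∀ j, Measurable (f j)) :
    ∫⁻ g : Fin k → ℝ, ∏ j, f j (g j) ∂(Measure.pi fun _ => ν) =
      ∏ j, ∫⁻ x, f j x ∂ν := by
  induction k with
  | zero => simp
  | succ k ih =>
    have hmp := (measurePreserving_piFinSuccAbove (fun _ : Fin (k+1) => ν) 0).symm
    have hF : Measurable fun g : Fin (k+1) → ℝ => ∏ j, f j (g j) := by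
      exact Finset.measurable_prod _ fun j _ => (hf j).comp (measurable_pi_apply j)
    rw [← hmp.lintegral_comp hF]
    have heq : ∀ z : ℝ × (Fin k → ℝ),
        (∏ j, f j (((MeasurableEquiv.piFinSuccAbove (fun _ => ℝ) 0).symm z) j)) =
          f 0 z.1 * ∏ j : Fin k, f j.succ (z.2 j) := by
      intro z
      simp only [MeasurableEquiv.piFinSuccAbove_symm_apply, Fin.insertNthEquiv,
        Equiv.coe_fn_mk, Fin.insertNth_zero]
      rw [Fin.prod_univ_succ]
      simp [Fin.cons_zero, Fin.cons_succ]
    simp_rw [heq]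
    rw [lintegral_prod_mul (f := f 0) (g := fun y : Fin k → ℝ => ∏ j, f j.succ (y j))
      ((hf 0).aemeasurable)
      ((Finset.measurable_prod _ fun j _ => (hf j.succ).comp (measurable_pi_apply j)).aemeasurable)]
    rw [ih _ fun j => hf j.succ, Fin.prod_univ_succ]

lemma integrable_exp_mul_gaussian (m : ℝ) (v : ℝ≥0) (hv : v ≠ 0) (u : ℝ) :
    Integrable (fun x => rexp (u * x)) (gaussianReal m v) := by
  refine ⟨(by fun_prop : Measurable fun x => rexp (u * x)).aestronglyMeasurable, ?_⟩
  rw [hasFiniteIntegral_iff_ofReal (Filter.Eventually.of_forall fun x => exp_nonneg _)]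
  rw [lintegral_exp_mul_gaussian m v hv u]
  exact ENNReal.ofReal_lt_top

lemma integral_exp_mul_gaussian (m : ℝ) (v : ℝ≥0) (hv : v ≠ 0) (u : ℝ) :
    ∫ x, rexp (u * x) ∂(gaussianReal m v) = rexp (u * m + v * u ^ 2 / 2) := by
  rw [integral_eq_lintegral_of_nonneg_ae (Filter.Eventually.of_forall fun x => exp_nonneg _)
    (by fun_prop : Measurable fun x => rexp (u * x)).aestronglyMeasurable,
    lintegral_exp_mul_gaussian m v hv u, ENNReal.toReal_ofReal (exp_nonneg _)]

variable {Ω : Type} [MeasurableSpace Ω] {μ : Measure Ω} [IsProbabilityMeasure μ]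

lemma lintegral_exp_sum_linear {n : ℕ} {ε : Ω → Fin n → ℝ}
    (hεm : ∀ i, Measurable fun ω => ε ω i)
    (hIndep : iIndepFun (fun i ω => ε ω i) μ)
    {V : ℝ≥0} (hV : V ≠ 0)
    (hmap : ∀ i, Measure.map (fun ω => ε ω i) μ = gaussianReal 0 V)
    (b : Fin n → ℝ) :
    ∫⁻ ω, ENNReal.ofReal (rexp (∑ i, b i * ε ω i)) ∂μ =
      ENNReal.ofReal (rexp (∑ i, (V:ℝ) * b i ^ 2 / 2)) := by
  set X : Fin n → Ω → ℝ := fun i ω => b i * ε ω i with hX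
  have hXm : ∀ i, Measurable (X i) := fun i => (hεm i).const_mul (b i)
  have hXindep : iIndepFun X μ :=
    hIndep.comp (fun i x => b i * x) fun i => measurable_id.const_mul (b i)
  have hexp_eq : ∀ ω, rexp (1 * (∑ i, X i) ω) = rexp (∑ i, b i * ε ω i) := by
    intro ω; simp [hX, Finset.sum_apply]
  have hint : ∀ i : Fin n, Integrable (fun ω => rexp (1 * X i ω)) μ := by
    intro i
    simp only [one_mul, hX]
    have hmeas : AEStronglyMeasurable (fun x : ℝ => rexp (b i * x))
        (Measure.map (fun ω => ε ω i) μ) :=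
      (by fun_prop : Measurable fun x : ℝ => rexp (b i * x)).aestronglyMeasurable
    have := (integrable_map_measure hmeas (hεm i).aemeasurable).mp
    rw [hmap i] at this
    exact this (integrable_exp_mul_gaussian 0 V hV (b i))
  have hsum_int : Integrable (fun ω => rexp (1 * (∑ i, X i) ω)) μ :=
    hXindep.integrable_exp_mul_sum hXm fun i _ => hint i
  have hsum_int' : Integrable (fun ω => rexp (∑ i, b i * ε ω i)) μ := by
    simpa only [hexp_eq] using hsum_int
  have hmgf_i : ∀ i, mgf (X i) μ 1 = rexp ((V:ℝ) * b i ^ 2 / 2) := by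
    intro i
    have hmeas : AEStronglyMeasurable (fun x : ℝ => rexp (b i * x))
        (Measure.map (fun ω => ε ω i) μ) :=
      (by fun_prop : Measurable fun x : ℝ => rexp (b i * x)).aestronglyMeasurable
    have h1 : mgf (X i) μ 1 = ∫ ω, rexp (b i * ε ω i) ∂μ := by
      simp [mgf, hX]
    rw [h1, ← integral_map (hεm i).aemeasurable hmeas, hmap i,
      integral_exp_mul_gaussian 0 V hV (b i), mul_zero, zero_add]
  have hmgf : mgf (∑ i, X i) μ 1 = rexp (∑ i, (V:ℝ) * b i ^ 2 / 2) := by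
    rw [hXindep.mgf_sum hXm]
    simp_rw [hmgf_i]
    rw [← Real.exp_sum]
  have h2 : ∫ ω, rexp (∑ i, b i * ε ω i) ∂μ = rexp (∑ i, (V:ℝ) * b i ^ 2 / 2) := by
    rw [← hmgf]; simp only [mgf]
    exact integral_congr_ae (Filter.Eventually.of_forall fun ω => (hexp_eq ω).symm)
  rw [← ofReal_integral_eq_lintegral_ofReal hsum_int'
    (Filter.Eventually.of_forall fun ω => exp_nonneg _), h2]

lemma quad_lower {p : ℕ} {B : Matrix (Fin p) (Fin p) ℝ} (hH : B.IsHermitian)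
    {a : ℝ} (hev : ∀ i, a ≤ hH.eigenvalues i) (x : Fin p → ℝ) :
    a * (x ⬝ᵥ x) ≤ x ⬝ᵥ (B *ᵥ x) := by
  have hpsd : (B - a • 1).PosSemidef := by
    have key : B - a • (1 : Matrix (Fin p) (Fin p) ℝ) =
        (hH.eigenvectorUnitary : Matrix (Fin p) (Fin p) ℝ) *
          diagonal (fun i => hH.eigenvalues i - a) *
          (star (hH.eigenvectorUnitary : Matrix (Fin p) (Fin p) ℝ)) := by
      set U := (hH.eigenvectorUnitary : Matrix (Fin p) (Fin p) ℝ) with hU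
      have hUU : U * star U = 1 := (Matrix.mem_unitaryGroup_iff).mp hH.eigenvectorUnitary.2
      have h1 : B = U * diagonal (RCLike.ofReal ∘ hH.eigenvalues) * star U :=
        hH.spectral_theorem
      have h2 : diagonal (fun i => hH.eigenvalues i - a) =
          diagonal (RCLike.ofReal ∘ hH.eigenvalues) - a • 1 := by
        rw [Matrix.smul_one_eq_diagonal, Matrix.diagonal_sub]
        rfl
      rw [h2, Matrix.mul_sub, Matrix.sub_mul, ← h1]
      congr 1
      rw [Matrix.mul_smul, Matrix.smul_mul, mul_one, hUU]
    rw [key, Matrix.star_eq_conjTranspose]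
    exact (posSemidef_diagonal_iff.mpr fun i => sub_nonneg.2 (hev i)).mul_mul_conjTranspose_same _
  have h0 := hpsd.dotProduct_mulVec_nonneg x
  simp only [star_trivial, Matrix.sub_mulVec, Matrix.smul_mulVec, Matrix.one_mulVec,
    dotProduct_sub, dotProduct_smul, smul_eq_mul] at h0
  linarith

lemma inv_quad_upper {p : ℕ} {B : Matrix (Fin p) (Fin p) ℝ} (hH : B.IsHermitian)
    {a : ℝ} (ha : 0 < a) (hev : ∀ i, a ≤ hH.eigenvalues i)
    (hdet : IsUnit B.det) (g : Fin p → ℝ) :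
    g ⬝ᵥ (B⁻¹ *ᵥ g) ≤ (g ⬝ᵥ g) / a := by
  set w : Fin p → ℝ := B⁻¹ *ᵥ g with hw
  have hBw : B *ᵥ w = g := by
    rw [hw, Matrix.mulVec_mulVec, Matrix.mul_nonsing_inv _ hdet, Matrix.one_mulVec]
  have h1 : a * (w ⬝ᵥ w) ≤ w ⬝ᵥ g := by
    have := quad_lower hH hev w
    rwa [hBw] at this
  have hCS : (w ⬝ᵥ g) ^ 2 ≤ (w ⬝ᵥ w) * (g ⬝ᵥ g) := by
    simpa [dotProduct, pow_two] using
      Finset.sum_mul_sq_le_sq_mul_sq Finset.univ w g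
  have hgg : 0 ≤ g ⬝ᵥ g := Finset.sum_nonneg fun i _ => mul_self_nonneg _
  have hww : 0 ≤ w ⬝ᵥ w := Finset.sum_nonneg fun i _ => mul_self_nonneg _
  have hgw : g ⬝ᵥ w = w ⬝ᵥ g := dotProduct_comm g w
  rw [hgw, div_eq_inv_mul]
  rcases le_or_gt (w ⬝ᵥ g) 0 with h | h
  · exact h.trans (by positivity)
  · rw [le_inv_mul_iff₀ ha]
    nlinarith


set_option maxHeartbeats 2000000 in
theorem stmt_6 :
    ∃ C : ℝ, 0 < C ∧
      ∀ (n p : ℕ), 1 ≤ n → 1 ≤ p →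
      ∀ (Θ : Matrix (Fin n) (Fin p) ℝ) (hH : (Θᵀ * Θ).IsHermitian)
        (c : ℝ), 0 < c → (∀ i, c * n ≤ hH.eigenvalues i) →
      ∀ (Ω : Type) (_ : MeasurableSpace Ω) (μ : Measure Ω), IsProbabilityMeasure μ →
      ∀ (ε : Ω → Fin n → ℝ), (∀ i, Measurable fun ω => ε ω i) →
      ∀ (s : ℝ), 0 < s →
      iIndepFun (fun i ω => ε ω i) μ →
      (∀ i, Measure.map (fun ω => ε ω i) μ = gaussianReal 0 (Real.toNNReal (s ^ 2))) →
      ∀ (ξstar : Fin p → ℝ) (ξhat : Ω → Fin p → ℝ),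
      (∀ ω, ξhat ω = ((Θᵀ * Θ)⁻¹ * Θᵀ).mulVec (Θ.mulVec ξstar + ε ω)) →
      ∀ δ : ℝ, δ ∈ Set.Ioc (0:ℝ) (1/2) →
      ENNReal.ofReal (1 - δ) ≤
        μ {ω | ‖(EuclideanSpace.equiv (Fin p) ℝ).symm (ξhat ω - ξstar)‖
          ≤ C * s * Real.sqrt (p * Real.log (1 / δ) / (c * n))} := by
  refine ⟨3, by norm_num, ?_⟩
  intro n p hn hp Θ hH c hc hev Ω mΩ μ hμ ε hεm s hs hIndep hmap ξstar ξhat hξ δ hδ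
  obtain ⟨hδ0, hδhalf⟩ := hδ
  -- basic numerics
  have hn1 : (1:ℝ) ≤ (n:ℝ) := by exact_mod_cast hn
  have hp1 : (1:ℝ) ≤ (p:ℝ) := by exact_mod_cast hp
  have hcn : 0 < c * (n:ℝ) := mul_pos hc (by linarith)
  have hs2 : (0:ℝ) < s ^ 2 := by positivity
  -- the matrix B and its inverse
  set B : Matrix (Fin p) (Fin p) ℝ := Θᵀ * Θ with hB
  have hdet : IsUnit B.det := by
    rw [hH.det_eq_prod_eigenvalues]
    refine isUnit_iff_ne_zero.2 (ne_of_gt ?_)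
    refine Finset.prod_pos fun i _ => ?_
    have := hev i
    have : (0:ℝ) < hH.eigenvalues i := lt_of_lt_of_le hcn (hev i)
    exact_mod_cast this
  have hBsymm : Bᵀ = B := by
    rw [← Matrix.conjTranspose_eq_transpose_of_trivial]; exact hH
  set A : Matrix (Fin p) (Fin n) ℝ := B⁻¹ * Θᵀ with hA
  -- difference vector
  set v : Ω → Fin p → ℝ := fun ω => A *ᵥ ε ω with hv
  have hdiff : ∀ ω, ξhat ω - ξstar = v ω := by
    intro ω
    rw [hξ ω, Matrix.mulVec_add, Matrix.mulVec_mulVec, Matrix.mul_assoc, ← hB,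
      Matrix.nonsing_inv_mul B hdet]
    simp [Matrix.one_mulVec, hv, hA]
  have hv_meas : ∀ j, Measurable fun ω => v ω j := by
    intro j
    have : (fun ω => v ω j) = fun ω => ∑ i, A j i * ε ω i := by
      funext ω; simp [hv, Matrix.mulVec, dotProduct]
    rw [this]
    exact Finset.measurable_sum _ fun i _ => (hεm i).const_mul _
  set F : Ω → ℝ := fun ω => ∑ j, (v ω j) ^ 2 with hF
  have hF_meas : Measurable F :=
    Finset.measurable_sum _ fun j _ => (hv_meas j).pow_const 2
  have hF_nonneg : ∀ ω, 0 ≤ F ω := fun ω => Finset.sum_nonneg fun j _ => sq_nonneg _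
  have hnorm : ∀ ω, ‖(EuclideanSpace.equiv (Fin p) ℝ).symm (ξhat ω - ξstar)‖
      = Real.sqrt (F ω) := by
    intro ω
    rw [EuclideanSpace.norm_eq]
    congr 1
    refine Finset.sum_congr rfl fun j _ => ?_
    rw [hdiff ω]
    simp [Real.norm_eq_abs, sq_abs]
  -- numeric quantities
  set ℓ : ℝ := Real.log (1 / δ) with hℓ
  have hℓpos : 0 < ℓ := Real.log_pos (by rw [one_div]; rw [lt_inv_comm₀] <;> linarith)
  set lam : ℝ := c * n / (4 * s ^ 2) with hlam
  have hlam_pos : 0 < lam := by positivity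
  set q : ℝ := (p:ℝ) * ℓ / (c * n) with hq
  have hq_nonneg : 0 ≤ q := by positivity
  set R : ℝ := 3 * s * Real.sqrt q with hR
  have hR_nonneg : 0 ≤ R := by positivity
  set T : ℝ := R ^ 2 with hT
  have hT_eq : T = 9 * s ^ 2 * q := by
    rw [hT, hR, mul_pow, mul_pow, Real.sq_sqrt hq_nonneg]; ring
  have hlamT : lam * T = 9 / 4 * ((p:ℝ) * ℓ) := by
    rw [hT_eq, hlam, hq]
    field_simp
  -- the variance
  set V : ℝ≥0 := Real.toNNReal (s ^ 2) with hV
  have hVne : V ≠ 0 := by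
    simp only [hV, ne_eq, Real.toNNReal_eq_zero, not_le]
    exact hs2
  have hVcoe : (V : ℝ) = s ^ 2 := Real.coe_toNNReal _ hs2.le
  -- auxiliary gaussian measure
  set G : Measure (Fin p → ℝ) := Measure.pi (fun _ => gaussianReal 0 1) with hG
  set t : ℝ := Real.sqrt (2 * lam) with ht
  have ht2 : t ^ 2 = 2 * lam := Real.sq_sqrt (by positivity)
  -- step a
  have step_a : ∀ ω, ENNReal.ofReal (rexp (lam * F ω)) =
      ∫⁻ g, ENNReal.ofReal (rexp (∑ j, t * g j * v ω j)) ∂G := by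
    intro ω
    have h1 : ∀ g : Fin p → ℝ, ENNReal.ofReal (rexp (∑ j, t * g j * v ω j)) =
        ∏ j, ENNReal.ofReal (rexp ((t * v ω j) * g j)) := by
      intro g
      rw [← ENNReal.ofReal_prod_of_nonneg (fun j _ => Real.exp_nonneg _), ← Real.exp_sum]
      congr 2
      exact Finset.sum_congr rfl fun j _ => by ring
    simp_rw [h1]
    rw [lintegral_pi_prod (gaussianReal 0 1)
      (fun j y => ENNReal.ofReal (rexp ((t * v ω j) * y))) (fun j => by fun_prop)]
    have h2 : ∀ j : Fin p, ∫⁻ x, ENNReal.ofReal (rexp ((t * v ω j) * x)) ∂(gaussianReal 0 1) =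
        ENNReal.ofReal (rexp (lam * v ω j ^ 2)) := by
      intro j
      rw [lintegral_exp_mul_gaussian 0 1 one_ne_zero (t * v ω j)]
      congr 1
      rw [mul_zero, zero_add]
      push_cast
      rw [one_mul, mul_pow, ht2]
      ring
    simp_rw [h2]
    rw [← ENNReal.ofReal_prod_of_nonneg (fun j _ => Real.exp_nonneg _), ← Real.exp_sum]
    congr 2
    rw [hF, Finset.mul_sum]
  -- measurability for swap
  have hW_meas : Measurable (fun z : Ω × (Fin p → ℝ) =>
      ENNReal.ofReal (rexp (∑ j, t * z.2 j * v z.1 j))) := by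
    apply Measurable.ennreal_ofReal
    apply Measurable.exp
    apply Finset.measurable_sum
    intro j _
    have h1 : Measurable fun z : Ω × (Fin p → ℝ) => z.2 j :=
      (measurable_pi_apply j).comp measurable_snd
    have h2 : Measurable fun z : Ω × (Fin p → ℝ) => v z.1 j :=
      (hv_meas j).comp measurable_fst
    exact (h1.const_mul t).mul h2
  -- step c : the inner integral over ω
  have step_c : ∀ g : Fin p → ℝ,
      ∫⁻ ω, ENNReal.ofReal (rexp (∑ j, t * g j * v ω j)) ∂μ =
        ENNReal.ofReal (rexp (∑ i, s ^ 2 * (∑ j, t * g j * A j i) ^ 2 / 2)) := by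
    intro g
    have hswap : ∀ ω, ∑ j, t * g j * v ω j = ∑ i, (∑ j, t * g j * A j i) * ε ω i := by
      intro ω
      simp only [hv, Matrix.mulVec, dotProduct, Finset.mul_sum, Finset.sum_mul]
      rw [Finset.sum_comm]
      refine Finset.sum_congr rfl fun j _ => Finset.sum_congr rfl fun i _ => by ring
    simp_rw [hswap]
    rw [lintegral_exp_sum_linear hεm hIndep hVne hmap (fun i => ∑ j, t * g j * A j i)]
    simp_rw [hVcoe]
  -- step d : bound the exponent
  have step_d : ∀ g : Fin p → ℝ,
      ∑ i, s ^ 2 * (∑ j, t * g j * A j i) ^ 2 / 2 ≤ ∑ j, (g j) ^ 2 / 4 := by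
    intro g
    set u : Fin n → ℝ := g ᵥ* A with hu
    have hterm : ∀ i, (∑ j, t * g j * A j i) = t * u i := by
      intro i
      rw [hu, Matrix.vecMul, dotProduct, Finset.mul_sum]
      refine Finset.sum_congr rfl fun j _ => by ring
    have hsum_eq : ∑ i, s ^ 2 * (∑ j, t * g j * A j i) ^ 2 / 2
        = s ^ 2 * lam * (u ⬝ᵥ u) := by
      simp_rw [hterm]
      rw [dotProduct, Finset.mul_sum]
      refine Finset.sum_congr rfl fun i _ => ?_
      rw [mul_pow, ← pow_two]
      linear_combination (s ^ 2 * u i ^ 2 / 2) * ht2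
    have huAT : u = Aᵀ *ᵥ g := by
      rw [hu, ← Matrix.vecMul_transpose, Matrix.transpose_transpose]
    have hAAT : A * Aᵀ = B⁻¹ := by
      rw [hA, Matrix.transpose_mul, Matrix.transpose_transpose, Matrix.transpose_nonsing_inv,
        hBsymm]
      calc B⁻¹ * Θᵀ * (Θ * B⁻¹) = B⁻¹ * (Θᵀ * Θ) * B⁻¹ := by
            rw [Matrix.mul_assoc, Matrix.mul_assoc, Matrix.mul_assoc]
        _ = B⁻¹ * B * B⁻¹ := by rw [hB]
        _ = B⁻¹ := by rw [Matrix.nonsing_inv_mul B hdet, Matrix.one_mul]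
    have huu : u ⬝ᵥ u = g ⬝ᵥ (B⁻¹ *ᵥ g) := by
      calc u ⬝ᵥ u = (g ᵥ* A) ⬝ᵥ u := by rw [hu]
        _ = g ⬝ᵥ (A *ᵥ u) := (Matrix.dotProduct_mulVec g A u).symm
        _ = g ⬝ᵥ (A *ᵥ (Aᵀ *ᵥ g)) := by rw [← huAT]
        _ = g ⬝ᵥ ((A * Aᵀ) *ᵥ g) := by rw [Matrix.mulVec_mulVec]
        _ = g ⬝ᵥ (B⁻¹ *ᵥ g) := by rw [hAAT]
    have hbound : u ⬝ᵥ u ≤ (g ⬝ᵥ g) / (c * n) := by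
      rw [huu]
      exact inv_quad_upper hH hcn hev hdet g
    have hgg : g ⬝ᵥ g = ∑ j, (g j) ^ 2 := by
      rw [dotProduct]; exact Finset.sum_congr rfl fun j _ => (pow_two _).symm
    rw [hsum_eq]
    have hfac : s ^ 2 * lam = c * n / 4 := by
      rw [hlam]; field_simp
    calc s ^ 2 * lam * (u ⬝ᵥ u) ≤ s ^ 2 * lam * ((g ⬝ᵥ g) / (c * n)) := by
          apply mul_le_mul_of_nonneg_left hbound (by positivity)
      _ = (∑ j, (g j) ^ 2) / 4 := by rw [hfac, hgg]; field_simp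
      _ = ∑ j, (g j) ^ 2 / 4 := by rw [Finset.sum_div]
  -- step e
  have step_e : ∫⁻ g, ENNReal.ofReal (rexp (∑ j, (g j) ^ 2 / 4)) ∂G =
      (ENNReal.ofReal (Real.sqrt 2)) ^ p := by
    have h1 : ∀ g : Fin p → ℝ, ENNReal.ofReal (rexp (∑ j, (g j) ^ 2 / 4)) =
        ∏ j, ENNReal.ofReal (rexp ((g j) ^ 2 / 4)) := by
      intro g
      rw [← ENNReal.ofReal_prod_of_nonneg (fun j _ => Real.exp_nonneg _), ← Real.exp_sum]
    simp_rw [h1]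
    rw [lintegral_pi_prod (gaussianReal 0 1)
      (fun j y => ENNReal.ofReal (rexp (y ^ 2 / 4))) (fun j => by fun_prop)]
    simp_rw [lintegral_exp_sq_quarter_gaussian]
    rw [Finset.prod_const, Finset.card_univ, Fintype.card_fin]
  -- the full chain
  have hL : ∫⁻ ω, ENNReal.ofReal (rexp (lam * F ω)) ∂μ ≤
      (ENNReal.ofReal (Real.sqrt 2)) ^ p := by
    calc ∫⁻ ω, ENNReal.ofReal (rexp (lam * F ω)) ∂μ
        = ∫⁻ ω, ∫⁻ g, ENNReal.ofReal (rexp (∑ j, t * g j * v ω j)) ∂G ∂μ := by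
          exact lintegral_congr fun ω => step_a ω
      _ = ∫⁻ g, ∫⁻ ω, ENNReal.ofReal (rexp (∑ j, t * g j * v ω j)) ∂μ ∂G := by
          exact lintegral_lintegral_swap hW_meas.aemeasurable
      _ = ∫⁻ g, ENNReal.ofReal (rexp (∑ i, s ^ 2 * (∑ j, t * g j * A j i) ^ 2 / 2)) ∂G := by
          exact lintegral_congr fun g => step_c g
      _ ≤ ∫⁻ g, ENNReal.ofReal (rexp (∑ j, (g j) ^ 2 / 4)) ∂G := by
          refine lintegral_mono fun g => ?_
          exact ENNReal.ofReal_le_ofReal (Real.exp_le_exp.2 (step_d g))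
      _ = (ENNReal.ofReal (Real.sqrt 2)) ^ p := step_e
  -- Markov / Chernoff
  set K : ENNReal := ENNReal.ofReal (rexp (lam * T)) with hK
  have hmarkov : K * μ {ω | K ≤ ENNReal.ofReal (rexp (lam * F ω))} ≤
      (ENNReal.ofReal (Real.sqrt 2)) ^ p := by
    refine le_trans ?_ hL
    exact mul_meas_ge_le_lintegral₀
      ((hF_meas.const_mul lam).exp.ennreal_ofReal).aemeasurable K
  have hsubset : {ω | T ≤ F ω} ⊆ {ω | K ≤ ENNReal.ofReal (rexp (lam * F ω))} := by
    intro ω hω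
    exact ENNReal.ofReal_le_ofReal (Real.exp_le_exp.2
      (mul_le_mul_of_nonneg_left hω hlam_pos.le))
  have hKne : K ≠ 0 := by
    simp [hK, Real.exp_pos]
  have hKtop : K ≠ ⊤ := ENNReal.ofReal_ne_top
  have htail : μ {ω | T ≤ F ω} ≤ ENNReal.ofReal δ := by
    have h1 : μ {ω | T ≤ F ω} ≤ (ENNReal.ofReal (Real.sqrt 2)) ^ p / K := by
      rw [ENNReal.le_div_iff_mul_le (Or.inl hKne) (Or.inl hKtop), mul_comm]
      exact le_trans (mul_le_mul_right (measure_mono hsubset) K) hmarkov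
    refine h1.trans ?_
    rw [ENNReal.div_le_iff hKne hKtop]
    rw [← ENNReal.ofReal_pow (Real.sqrt_nonneg 2), hK, ← ENNReal.ofReal_mul hδ0.le]
    apply ENNReal.ofReal_le_ofReal
    -- real inequality : √2 ^ p ≤ δ * exp (lam * T)
    have hlog : Real.log δ = -ℓ := by
      rw [hℓ, one_div, Real.log_inv]; ring
    have hδexp : δ = rexp (-ℓ) := by
      rw [← hlog, Real.exp_log hδ0]
    have h2δ : (2:ℝ) ≤ 1 / δ := by
      rw [le_div_iff₀ hδ0]; linarith
    have hlog2 : Real.log 2 ≤ ℓ := by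
      rw [hℓ]; exact Real.log_le_log (by norm_num) h2δ
    have hsqrt2 : Real.sqrt 2 = rexp (Real.log 2 / 2) := by
      rw [← Real.log_sqrt (by norm_num : (0:ℝ) ≤ 2),
        Real.exp_log (by positivity)]
    rw [hsqrt2, ← Real.exp_nat_mul, hδexp, ← Real.exp_add]
    apply Real.exp_le_exp.2
    have h3 : (p:ℝ) * Real.log 2 ≤ (p:ℝ) * ℓ :=
      mul_le_mul_of_nonneg_left hlog2 (by positivity)
    have h4 : ℓ ≤ (p:ℝ) * ℓ := by nlinarith
    rw [hlamT]
    linarith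
  -- conclusion
  have hseteq : {ω | ‖(EuclideanSpace.equiv (Fin p) ℝ).symm (ξhat ω - ξstar)‖
      ≤ 3 * s * Real.sqrt ((p:ℝ) * Real.log (1 / δ) / (c * n))} =
      {ω | Real.sqrt (F ω) ≤ R} := by
    ext ω
    simp only [Set.mem_setOf_eq, hnorm ω, hR, hq, hℓ]
  rw [hseteq]
  have hSm : MeasurableSet {ω | Real.sqrt (F ω) ≤ R} :=
    measurableSet_le (hF_meas.sqrt) measurable_const
  have hcompl : {ω | Real.sqrt (F ω) ≤ R}ᶜ ⊆ {ω | T ≤ F ω} := by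
    intro ω hω
    simp only [Set.mem_compl_iff, Set.mem_setOf_eq, not_le] at hω
    have : R ^ 2 < Real.sqrt (F ω) ^ 2 := by
      apply pow_lt_pow_left₀ hω hR_nonneg
      norm_num
    rw [Real.sq_sqrt (hF_nonneg ω)] at this
    exact le_of_lt (hT ▸ this)
  have hcc : μ {ω | Real.sqrt (F ω) ≤ R}ᶜ ≤ ENNReal.ofReal δ :=
    le_trans (measure_mono hcompl) htail
  have hadd : μ {ω | Real.sqrt (F ω) ≤ R} + μ {ω | Real.sqrt (F ω) ≤ R}ᶜ = 1 :=
    (measure_add_measure_compl hSm).trans measure_univ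
  have h1 : ENNReal.ofReal (1 - δ) = 1 - ENNReal.ofReal δ := by
    rw [ENNReal.ofReal_sub _ hδ0.le, ENNReal.ofReal_one]
  rw [h1]
  have h2 : μ {ω | Real.sqrt (F ω) ≤ R} = 1 - μ {ω | Real.sqrt (F ω) ≤ R}ᶜ :=
    ENNReal.eq_sub_of_add_eq (measure_ne_top μ _) hadd
  rw [h2]
  exact tsub_le_tsub_left hcc 1

end S6
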